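/- Let a > 1 and b ≥ 0 be real numbers and define f(t) = ( b(2t − 1) + (1 + t)² ) / ( a(2t − 1) − t² ). Then the minimum of f over the interval [1, a + √(a² − a)) is attained at t₀ = ( a + b − 1 + √( (a + b − 1)² + 8a(a + b + 1) ) ) / ( 2(a + b + 1) ), which satisfies 1 < t₀ < a + √(a² − a), and f(t₀) = ( (2a − 1)b + 3a + 1 + √( (a + b − 1)² + 8a(a + b + 1) ) ) / ( 2a(a − 1) ). -/

import Mathlib

set_option maxHeartbeats 1000000


/-- minimization of `f(t)` in the proof of Theorem 2.1 of Cheng–Qi.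
For real `a > 1`, `b ≥ 0`, let `f(t) = (b(2t−1) + (1+t)²)/(a(2t−1) − t²)` and
`t₀ = (a + b − 1 + √((a+b−1)² + 8a(a+b+1)))/(2(a+b+1))`.  Then `1 < t₀ < a + √(a² − a)`,
`f` attains its minimum over `[1, a + √(a² − a))` at `t₀`, and
`f(t₀) = ((2a−1)b + 3a + 1 + √((a+b−1)² + 8a(a+b+1)))/(2a(a−1))`. -/
theorem f_min_at_t0
    (a b : ℝ) (ha : 1 < a) (hb : 0 ≤ b)
    (f : ℝ → ℝ)
    (hf : ∀ t, f t = (b * (2 * t - 1) + (1 + t) ^ 2) / (a * (2 * t - 1) - t ^ 2))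
    (t0 : ℝ)
    (ht0 : t0 = (a + b - 1 + Real.sqrt ((a + b - 1) ^ 2 + 8 * a * (a + b + 1))) /
      (2 * (a + b + 1))) :
    1 < t0 ∧ t0 < a + Real.sqrt (a ^ 2 - a) ∧
    (∀ t ∈ Set.Ico (1 : ℝ) (a + Real.sqrt (a ^ 2 - a)), f t0 ≤ f t) ∧
    f t0 = ((2 * a - 1) * b + 3 * a + 1 +
      Real.sqrt ((a + b - 1) ^ 2 + 8 * a * (a + b + 1))) / (2 * a * (a - 1)) := by
  set s := Real.sqrt ((a + b - 1) ^ 2 + 8 * a * (a + b + 1)) with hs_def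
  set r := Real.sqrt (a ^ 2 - a) with hr_def
  have hq : (0:ℝ) < a + b + 1 := by linarith
  have hdisc : (0:ℝ) ≤ (a + b - 1) ^ 2 + 8 * a * (a + b + 1) := by nlinarith
  have hs2 : s ^ 2 = (a + b - 1) ^ 2 + 8 * a * (a + b + 1) := Real.sq_sqrt hdisc
  have hs0 : 0 ≤ s := Real.sqrt_nonneg _
  have hsgt : a + b + 3 < s := by nlinarith [hs2, hs0, sq_nonneg (s - (a + b + 3))]
  have h2q : (2 * (a + b + 1)) ≠ 0 := by positivity
  have hts : s = 2 * (a + b + 1) * t0 - (a + b - 1) := by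
    rw [ht0]; field_simp; ring
  have ht01 : 1 < t0 := by
    rw [ht0, lt_div_iff₀ (by linarith : (0:ℝ) < 2 * (a + b + 1))]; linarith
  have h4 : 4 * (a + b + 1) * ((a + b + 1) * t0 ^ 2 - (a + b - 1) * t0 - 2 * a) = 0 := by
    linear_combination hs2 - (s + 2 * (a + b + 1) * t0 - (a + b - 1)) * hts
  have hquad : (a + b + 1) * t0 ^ 2 - (a + b - 1) * t0 - 2 * a = 0 := by
    have h4q : (4 * (a + b + 1)) ≠ 0 := by positivity
    exact (mul_eq_zero.mp h4).resolve_left h4q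
  have key : (a + b + 1) * (a * (2 * t0 - 1) - t0 ^ 2)
      = (a - 1) * (a + b - 1) + (2 * a ^ 2 + 2 * a * b + a - b + 1) * (t0 - 1) := by
    linear_combination -hquad
  have hcoef : (0:ℝ) < 2 * a ^ 2 + 2 * a * b + a - b + 1 := by nlinarith
  have hDt0 : 0 < a * (2 * t0 - 1) - t0 ^ 2 := by
    nlinarith [key, mul_pos (sub_pos.mpr ht01) hcoef]
  have hr2 : r ^ 2 = a ^ 2 - a := Real.sq_sqrt (by nlinarith)
  have hr0 : 0 ≤ r := Real.sqrt_nonneg _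
  have hra : a - 1 < r := by nlinarith [hr2, hr0, sq_nonneg (r - (a - 1))]
  have ht0r : t0 < a + r := by
    by_contra h
    push_neg at h
    nlinarith [hDt0, hr2, mul_nonneg (by linarith : (0:ℝ) ≤ t0 - a - r)
      (by linarith : (0:ℝ) ≤ t0 - a + r)]
  have hD : ∀ t, 1 ≤ t → t < a + r → 0 < a * (2 * t - 1) - t ^ 2 := by
    intro t h1 h2
    nlinarith [hr2, mul_pos (by linarith : (0:ℝ) < a + r - t)
      (by linarith : (0:ℝ) < t - a + r)]
  have hid : ∀ t : ℝ,
      2 * a * (a - 1) * (b * (2 * t - 1) + (1 + t) ^ 2)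
        - ((2 * a - 1) * b + 3 * a + 1 + s) * (a * (2 * t - 1) - t ^ 2)
      = (2 * a * (a - 1) + ((2 * a - 1) * b + 3 * a + 1 + s)) * (t - t0) ^ 2
        + (4 * t - 2 * t0 - 2 * a) * ((a + b + 1) * t0 ^ 2 - (a + b - 1) * t0 - 2 * a) := by
    intro t
    linear_combination (-(a * (2 * t - 1) - t ^ 2) - (t - t0) ^ 2) * hts
  have haa : (0:ℝ) < 2 * a * (a - 1) := by nlinarith
  have ht0val : f t0 = ((2 * a - 1) * b + 3 * a + 1 + s) / (2 * a * (a - 1)) := by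
    rw [hf, div_eq_div_iff (by linarith [hDt0] : a * (2 * t0 - 1) - t0 ^ 2 ≠ 0) haa.ne']
    have h := hid t0
    rw [hquad] at h
    linarith [h]
  refine ⟨ht01, ht0r, ?_, ht0val⟩
  intro t ht
  obtain ⟨h1, h2⟩ := ht
  have hDt := hD t h1 h2
  rw [ht0val, hf, div_le_div_iff₀ haa hDt]
  have h := hid t
  rw [hquad] at h
  have hM : (0:ℝ) ≤ 2 * a * (a - 1) + ((2 * a - 1) * b + 3 * a + 1 + s) := by nlinarith
  nlinarith [h, mul_nonneg hM (sq_nonneg (t - t0))]
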